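/- Let K be a group and θ₁, θ₂ commuting surjective group endomorphisms of K with ker θ₁ ∩ ker θ₂ = {1}. If ker θ₂ is a co-Hopfian group, then θ₁ and θ₂ *-commute. -/

import Mathlib

def StarCommute {X : Type*} (f g : X → X) : Prop :=
  ∀ x₁ x₂ : X, f x₁ = g x₂ → ∃! y : X, g y = x₁ ∧ f y = x₂

theorem stmt_6 {K : Type*} [Group K] (θ₁ θ₂ : K →* K)
    (hsurj₁ : Function.Surjective θ₁) (hsurj₂ : Function.Surjective θ₂)
    (hcomm : ∀ k : K, θ₁ (θ₂ k) = θ₂ (θ₁ k))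
    (hker : θ₁.ker ⊓ θ₂.ker = ⊥)
    (hcoHopf : ∀ φ : θ₂.ker →* θ₂.ker, Function.Injective φ → Function.Surjective φ) :
    StarCommute θ₁ θ₂ := by
  intro x₁ x₂ h
  -- restriction of θ₁ to ker θ₂
  have hmaps : ∀ x : K, x ∈ θ₂.ker → θ₁ x ∈ θ₂.ker := by
    intro x hx
    have hx' : θ₂ x = 1 := hx
    show θ₂ (θ₁ x) = 1
    rw [← hcomm, hx', map_one]
  let φ : θ₂.ker →* θ₂.ker :=
    (θ₁.domRestrict θ₂.ker).codRestrict θ₂.ker (fun x => hmaps x x.2)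
  have hφinj : Function.Injective φ := by
    intro a b hab
    have h1 : θ₁ (a : K) = θ₁ (b : K) := congrArg (Subtype.val) hab
    have : (a : K) * (b : K)⁻¹ ∈ θ₁.ker ⊓ θ₂.ker := by
      refine Subgroup.mem_inf.mpr ⟨?_, ?_⟩
      · show θ₁ _ = 1
        rw [map_mul, map_inv, h1, mul_inv_cancel]
      · exact mul_mem a.2 (inv_mem b.2)
    rw [hker, Subgroup.mem_bot] at this
    have : (a : K) = (b : K) := by
      have := mul_inv_eq_one.mp this
      exact this
    exact Subtype.ext this
  have hφsurj := hcoHopf φ hφinj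
  obtain ⟨z, hz⟩ := hsurj₂ x₁
  have hk : θ₁ z * x₂⁻¹ ∈ θ₂.ker := by
    show θ₂ _ = 1
    rw [map_mul, map_inv, ← hcomm, hz, h, mul_inv_cancel]
  obtain ⟨m, hm⟩ := hφsurj ⟨θ₁ z * x₂⁻¹, hk⟩
  have hm' : θ₁ (m : K) = θ₁ z * x₂⁻¹ := congrArg Subtype.val hm
  refine ⟨(m : K)⁻¹ * z, ⟨?_, ?_⟩, ?_⟩
  · rw [map_mul, map_inv]
    have : θ₂ (m : K) = 1 := m.2
    rw [this, hz, inv_one, one_mul]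
  · rw [map_mul, map_inv, hm']
    group
  · rintro y ⟨hy1, hy2⟩
    -- y and m⁻¹z agree modulo both kernels
    have hθ₂ : θ₂ ((m : K)⁻¹ * z) = x₁ := by
      rw [map_mul, map_inv]
      have : θ₂ (m : K) = 1 := m.2
      rw [this, hz, inv_one, one_mul]
    have hθ₁ : θ₁ ((m : K)⁻¹ * z) = x₂ := by
      rw [map_mul, map_inv, hm']; group
    have hmem : y * ((m : K)⁻¹ * z)⁻¹ ∈ θ₁.ker ⊓ θ₂.ker := by
      refine Subgroup.mem_inf.mpr ⟨?_, ?_⟩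
      · show θ₁ _ = 1
        rw [map_mul, map_inv, hy2, hθ₁, mul_inv_cancel]
      · show θ₂ _ = 1
        rw [map_mul, map_inv, hy1, hθ₂, mul_inv_cancel]
    rw [hker, Subgroup.mem_bot] at hmem
    exact mul_inv_eq_one.mp hmem
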